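/- Let $R$ be a reduced commutative ring and let $f \in R[T,T^{-1}]$ be a Laurent polynomial such that for every ring homomorphism $\varphi : R \to K$ into a field $K$, the image of $f$ under the induced map $R[T,T^{-1}] \to K[T,T^{-1}]$ is a constant, i.e., lies in the image of $C : K \to K[T,T^{-1}]$. Then $f$ itself is constant: $f = C(a)$ for some $a \in R$. -/

import Mathlib

open LaurentPolynomial

/-- The ring homomorphism `R[T,T⁻¹] →+* K[T,T⁻¹]` induced by a ring homomorphism
`φ : R →+* K`, applying `φ` to each coefficient (so `C r ↦ C (φ r)` and `T n ↦ T n`). -/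
noncomputable def LaurentPolynomial.mapRingHom {R K : Type*} [CommSemiring R] [CommSemiring K]
    (φ : R →+* K) : LaurentPolynomial R →+* LaurentPolynomial K :=
  AddMonoidAlgebra.liftNCRingHom ((C : K →+* LaurentPolynomial K).comp φ)
    { toFun := fun n => T (Multiplicative.toAdd n)
      map_one' := T_zero (R := K)
      map_mul' := fun m n => T_add (R := K) (Multiplicative.toAdd m) (Multiplicative.toAdd n) }
    fun _ _ => Commute.all _ _

private lemma LaurentPolynomial.map_single' {R K : Type*} [CommSemiring R] [CommSemiring K]
    (φ : R →+* K) (n : ℤ) (r : R) :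
    LaurentPolynomial.mapRingHom φ (AddMonoidAlgebra.single n r) = AddMonoidAlgebra.single n (φ r) := by
  show AddMonoidAlgebra.liftNC _ _ (AddMonoidAlgebra.single n r) = _
  rw [AddMonoidAlgebra.liftNC_single, single_eq_C_mul_T]
  rfl

private lemma LaurentPolynomial.map_coeff' {R K : Type*} [CommSemiring R] [CommSemiring K]
    (φ : R →+* K) (f : LaurentPolynomial R) (n : ℤ) :
    (LaurentPolynomial.mapRingHom φ f).coeff n = φ (f.coeff n) := by
  induction f using AddMonoidAlgebra.induction with
  | zero => simp
  | single_add a b f _ _ ih =>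
      rw [map_add, AddMonoidAlgebra.coeff_add, Finsupp.add_apply, LaurentPolynomial.map_single', ih, AddMonoidAlgebra.coeff_add, Finsupp.add_apply,
        map_add, AddMonoidAlgebra.coeff_single, AddMonoidAlgebra.coeff_single, Finsupp.single_apply, Finsupp.single_apply]
      split <;> simp


/-- Over a reduced commutative ring `R`, a Laurent polynomial whose image over every field
(under the map induced by any ring homomorphism from `R` to a field) is constant is itself
constant. -/
theorem laurentPolynomial_eq_C_of_pointwise_constant
    {R : Type u} [CommRing R] [IsReduced R] (f : LaurentPolynomial R)
    (h : ∀ (K : Type u) [Field K] (φ : R →+* K),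
      ∃ a : K, LaurentPolynomial.mapRingHom φ f = C a) :
    ∃ a : R, f = C a := by
  have key : ∀ n : ℤ, n ≠ 0 → f.coeff n = 0 := by
    intro n hn
    have hnil : f.coeff n ∈ nilradical R := by
      rw [nilradical_eq_sInf, Ideal.mem_sInf]
      intro p hp
      haveI : p.IsPrime := hp
      set K := FractionRing (R ⧸ p)
      let φ : R →+* K := (algebraMap (R ⧸ p) K).comp (Ideal.Quotient.mk p)
      obtain ⟨a, ha⟩ := h K φ
      have := LaurentPolynomial.map_coeff' φ f n
      rw [ha] at this
      have hC : (C a : LaurentPolynomial K).coeff n = 0 := by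
        rw [C_apply]; simp [hn]
      rw [hC] at this
      have h0 : Ideal.Quotient.mk p (f.coeff n) = 0 :=
        IsFractionRing.injective (R ⧸ p) K (by simpa [φ] using this.symm)
      exact Ideal.Quotient.eq_zero_iff_mem.mp h0
    simpa [nilradical_eq_zero] using hnil
  refine ⟨f.coeff 0, ?_⟩
  ext m
  show f.coeff m = (C (f.coeff 0)).coeff m
  rw [C_apply]
  by_cases hm : m = 0
  · simp [hm]
  · simp [key m hm, hm]
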